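/- Let G(x) = exp(−π x²) be the standard Gaussian and q > 2. Then the quantity ℋ(G) = ∫_ℝ (𝓠 G)(ξ)·|Ĝ(ξ)|^{q−2} dξ is strictly positive, where (𝓠 G)(ξ) = Re ∫_{(x₁∧x₂)>(x₃∨x₄)} G(x₁)G(x₂)G(x₃)G(x₄)·e^{2πi(−x₁−x₂+x₃+x₄)ξ} dx⃗. -/

import Mathlib

open MeasureTheory

/-- The quartic operator `𝓠`. -/
noncomputable def Qop (f : ℝ → ℂ) (ξ : ℝ) : ℝ :=
  (∫ x in {x : ℝ × ℝ × ℝ × ℝ | max x.2.2.1 x.2.2.2 < min x.1 x.2.1},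
    f x.1 * f x.2.1 * (starRingEnd ℂ) (f x.2.2.1 * f x.2.2.2) *
      Complex.exp (2 * Real.pi * Complex.I * (-x.1 - x.2.1 + x.2.2.1 + x.2.2.2) * ξ)).re

/-- The Fourier transform `f̂(ξ) = ∫ f(x) e^{−2πi xξ} dx`. -/
noncomputable def fourierInt (f : ℝ → ℂ) (ξ : ℝ) : ℂ :=
  ∫ x : ℝ, f x * Complex.exp (-(2 * Real.pi * Complex.I * x * ξ))

namespace Stmt17Aux

open Complex Real

noncomputable def E (x : ℝ × ℝ × ℝ × ℝ) : ℝ :=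
  rexp (-π * x.1 ^ 2) * (rexp (-π * x.2.1 ^ 2) *
    (rexp (-π * x.2.2.1 ^ 2) * rexp (-π * x.2.2.2 ^ 2)))

def S : Set (ℝ × ℝ × ℝ × ℝ) := {x | max x.2.2.1 x.2.2.2 < min x.1 x.2.1}

lemma E_pos (x : ℝ × ℝ × ℝ × ℝ) : 0 < E x := by
  unfold E; positivity

lemma E_cont : Continuous E := by unfold E; fun_prop

lemma E_int : Integrable E := by
  have g : Integrable (fun y : ℝ => rexp (-π * y ^ 2)) := integrable_exp_neg_mul_sq pi_pos
  unfold E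
  exact g.mul_prod (g.mul_prod (g.mul_prod g))

lemma S_open : IsOpen S := by
  apply isOpen_lt <;> fun_prop

lemma S_pos : 0 < volume S := by
  refine S_open.measure_pos volume ⟨((1 : ℝ), (1 : ℝ), (0 : ℝ), (0 : ℝ)), ?_⟩
  simp [S]

lemma cosGauss (a c : ℝ) (ha : 0 < a) :
    ∫ ξ : ℝ, Real.cos (c * ξ) * Real.exp (-a * ξ ^ 2)
      = Real.sqrt (π / a) * Real.exp (-c ^ 2 / (4 * a)) := by
  have hb : 0 < ((a : ℂ)).re := by simpa using ha
  have h := fourierIntegral_gaussian hb (c : ℂ)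
  have hint : Integrable (fun x : ℝ => Complex.exp (Complex.I * c * x) * Complex.exp (-(a:ℂ) * x ^ 2)) := by
    refine (integrable_cexp_quadratic hb (Complex.I * c) 0).congr (.of_forall fun x => ?_)
    dsimp only
    rw [← Complex.exp_add]
    ring_nf
  have hre : (∫ x : ℝ, (Complex.exp (Complex.I * c * x) * Complex.exp (-(a:ℂ) * x ^ 2)).re)
      = ((↑π / ↑a : ℂ) ^ (1 / 2 : ℂ) * Complex.exp (-(c:ℂ) ^ 2 / (4 * ↑a))).re := by
    rw [← h]; simpa using integral_re hint
  have hRHS : ((↑π / ↑a : ℂ) ^ (1 / 2 : ℂ) * Complex.exp (-(c:ℂ) ^ 2 / (4 * ↑a)))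
      = ((Real.sqrt (π / a) * Real.exp (-c ^ 2 / (4 * a)) : ℝ) : ℂ) := by
    have h3 : ((π / a : ℝ) : ℂ) ^ (1 / 2 : ℂ) = ((Real.sqrt (π / a) : ℝ) : ℂ) := by
      rw [Real.sqrt_eq_rpow, Complex.ofReal_cpow (by positivity)]
      norm_num
    rw [show (↑π / ↑a : ℂ) = ((π / a : ℝ) : ℂ) by push_cast; ring, h3,
      show (-(c:ℂ) ^ 2 / (4 * ↑a)) = ((-c ^ 2 / (4 * a) : ℝ) : ℂ) by push_cast; ring,
      ← Complex.ofReal_exp, ← Complex.ofReal_mul]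
  rw [hRHS, Complex.ofReal_re] at hre
  rw [← hre]
  refine integral_congr_ae (.of_forall fun x => ?_)
  dsimp only
  have h1 : Complex.I * c * x = ((c * x : ℝ) : ℂ) * Complex.I := by push_cast; ring
  have h2 : -(a:ℂ) * (x:ℂ) ^ 2 = ((-a * x ^ 2 : ℝ) : ℂ) := by push_cast; ring
  rw [h1, h2, ← Complex.ofReal_exp]
  simp only [Complex.mul_re, Complex.ofReal_re, Complex.ofReal_im,
    Complex.exp_ofReal_mul_I_re, Complex.exp_ofReal_mul_I_im, mul_zero, sub_zero]

lemma fourierGauss (ξ : ℝ) :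
    fourierInt (fun x => Complex.exp (-(Real.pi : ℂ) * x ^ 2)) ξ
      = Complex.exp (-(Real.pi : ℂ) * ξ ^ 2) := by
  have hb : 0 < ((Real.pi : ℂ)).re := by simpa using Real.pi_pos
  have h := fourierIntegral_gaussian hb ((-2 * π * ξ : ℝ) : ℂ)
  have heq : ∀ x : ℝ, Complex.exp (-(Real.pi : ℂ) * x ^ 2) *
      Complex.exp (-(2 * Real.pi * Complex.I * x * ξ))
      = Complex.exp (Complex.I * ((-2 * π * ξ : ℝ) : ℂ) * x) * Complex.exp (-(π : ℂ) * x ^ 2) := by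
    intro x
    rw [mul_comm]
    congr 1
    push_cast
    ring
  rw [fourierInt, integral_congr_ae (.of_forall heq), h]
  have hπ : (Real.pi : ℂ) ≠ 0 := Complex.ofReal_ne_zero.mpr Real.pi_ne_zero
  rw [div_self hπ, Complex.one_cpow, one_mul]
  congr 1
  push_cast
  field_simp
  ring

lemma Qop_eq (G : ℝ → ℂ) (hG : ∀ x : ℝ, G x = Complex.exp (-(Real.pi : ℂ) * x ^ 2)) (ξ : ℝ) :
    Qop G ξ = ∫ x in S, E x *
      Real.cos (2 * π * (-x.1 - x.2.1 + x.2.2.1 + x.2.2.2) * ξ) := by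
  have heq : ∀ x : ℝ × ℝ × ℝ × ℝ,
      G x.1 * G x.2.1 * (starRingEnd ℂ) (G x.2.2.1 * G x.2.2.2) *
        Complex.exp (2 * Real.pi * Complex.I * (-x.1 - x.2.1 + x.2.2.1 + x.2.2.2) * ξ)
      = ((E x : ℝ) : ℂ) *
        Complex.exp (((2 * π * (-x.1 - x.2.1 + x.2.2.1 + x.2.2.2) * ξ : ℝ) : ℂ) * Complex.I) := by
    intro x
    rw [hG, hG, hG, hG]
    have hg : ∀ y : ℝ, Complex.exp (-(Real.pi : ℂ) * y ^ 2) = ((rexp (-π * y ^ 2) : ℝ) : ℂ) := by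
      intro y
      rw [Complex.ofReal_exp]
      push_cast
      ring_nf
    rw [hg, hg, hg, hg, map_mul, Complex.conj_ofReal, Complex.conj_ofReal]
    rw [show (2 * Real.pi * Complex.I * (-(x.1:ℂ) - x.2.1 + x.2.2.1 + x.2.2.2) * ξ)
        = (((2 * π * (-x.1 - x.2.1 + x.2.2.1 + x.2.2.2) * ξ : ℝ) : ℂ) * Complex.I) by
      push_cast; ring]
    rw [E]
    push_cast
    ring
  have hint : IntegrableOn (fun x : ℝ × ℝ × ℝ × ℝ => ((E x : ℝ) : ℂ) *
      Complex.exp (((2 * π * (-x.1 - x.2.1 + x.2.2.1 + x.2.2.2) * ξ : ℝ) : ℂ) * Complex.I)) S := by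
    refine Integrable.mono' (E_int.restrict (s := S)) ?_ (.of_forall fun x => ?_)
    · refine Continuous.aestronglyMeasurable ?_
      have := E_cont
      fun_prop
    · rw [norm_mul, Complex.norm_real,
        Complex.norm_exp]
      simp [abs_of_pos (E_pos x)]
  rw [Qop]
  rw [integral_congr_ae (.of_forall heq)]
  rw [show S = {x : ℝ × ℝ × ℝ × ℝ | max x.2.2.1 x.2.2.2 < min x.1 x.2.1} from rfl] at hint ⊢
  have hre : (∫ x in {x : ℝ × ℝ × ℝ × ℝ | max x.2.2.1 x.2.2.2 < min x.1 x.2.1},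
      (((E x : ℝ) : ℂ) * Complex.exp
        (((2 * π * (-x.1 - x.2.1 + x.2.2.1 + x.2.2.2) * ξ : ℝ) : ℂ) * Complex.I)).re)
      = (∫ x in {x : ℝ × ℝ × ℝ × ℝ | max x.2.2.1 x.2.2.2 < min x.1 x.2.1},
        ((E x : ℝ) : ℂ) * Complex.exp
          (((2 * π * (-x.1 - x.2.1 + x.2.2.1 + x.2.2.2) * ξ : ℝ) : ℂ) * Complex.I)).re := by
    simpa using integral_re hint
  rw [← hre]
  refine integral_congr_ae (.of_forall fun x => ?_)
  simp only [Complex.mul_re, Complex.ofReal_re, Complex.ofReal_im,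
    Complex.exp_ofReal_mul_I_re, Complex.exp_ofReal_mul_I_im, zero_mul, sub_zero]

end Stmt17Aux

open Stmt17Aux Real in
theorem stmt_17 (q : ℝ) (hq : 2 < q)
    (G : ℝ → ℂ) (hG : ∀ x : ℝ, G x = Complex.exp (-(Real.pi : ℂ) * x ^ 2)) :
    0 < ∫ ξ : ℝ, Qop G ξ * ‖fourierInt G ξ‖ ^ (q - 2) := by
  have hGf : G = fun x : ℝ => Complex.exp (-(Real.pi : ℂ) * x ^ 2) := funext hG
  set a : ℝ := π * (q - 2) with ha_def
  have ha : 0 < a := by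
    have := Real.pi_pos
    have h2 : 0 < q - 2 := by linarith
    positivity
  -- rewrite the integrand
  have habs : ∀ ξ : ℝ, ‖fourierInt G ξ‖ ^ (q - 2) = rexp (-a * ξ ^ 2) := by
    intro ξ
    rw [hGf, fourierGauss ξ]
    rw [show (-(Real.pi : ℂ) * (ξ:ℂ) ^ 2) = ((-π * ξ ^ 2 : ℝ) : ℂ) by push_cast; ring]
    rw [← Complex.ofReal_exp, Complex.norm_real, Real.norm_eq_abs, abs_of_pos (Real.exp_pos _),
      ← Real.exp_log (Real.exp_pos (-π * ξ ^ 2)), ← Real.exp_mul, Real.log_exp]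
    congr 1
    rw [ha_def]; ring
  have hstep : (fun ξ : ℝ => Qop G ξ * ‖fourierInt G ξ‖ ^ (q - 2))
      = fun ξ : ℝ => ∫ x in S,
          E x * Real.cos (2 * π * (-x.1 - x.2.1 + x.2.2.1 + x.2.2.2) * ξ) * rexp (-a * ξ ^ 2) := by
    funext ξ
    rw [habs ξ, Qop_eq G hG ξ, ← integral_mul_const]
  rw [hstep]
  -- Fubini
  have hFint : Integrable (Function.uncurry fun (ξ : ℝ) (x : ℝ × ℝ × ℝ × ℝ) =>
      E x * Real.cos (2 * π * (-x.1 - x.2.1 + x.2.2.1 + x.2.2.2) * ξ) * rexp (-a * ξ ^ 2))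
      (volume.prod (volume.restrict S)) := by
    have hg : Integrable (fun ξ : ℝ => rexp (-a * ξ ^ 2)) := integrable_exp_neg_mul_sq ha
    have hb : Integrable (fun z : ℝ × (ℝ × ℝ × ℝ × ℝ) => rexp (-a * z.1 ^ 2) * E z.2)
        (volume.prod (volume.restrict S)) := hg.mul_prod E_int.restrict
    refine hb.mono' ?_ (.of_forall fun z => ?_)
    · refine Continuous.aestronglyMeasurable ?_
      have := E_cont
      fun_prop
    · simp only [Function.uncurry]
      rw [Real.norm_eq_abs, abs_mul, abs_mul, abs_of_pos (E_pos _),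
        abs_of_pos (Real.exp_pos _)]
      have h1 : |Real.cos (2 * π * (-z.2.1 - z.2.2.1 + z.2.2.2.1 + z.2.2.2.2) * z.1)| ≤ 1 :=
        Real.abs_cos_le_one _
      calc E z.2 * |Real.cos (2 * π * (-z.2.1 - z.2.2.1 + z.2.2.2.1 + z.2.2.2.2) * z.1)|
            * rexp (-a * z.1 ^ 2)
          ≤ E z.2 * 1 * rexp (-a * z.1 ^ 2) := by
            gcongr
            exact (E_pos _).le
        _ = rexp (-a * z.1 ^ 2) * E z.2 := by ring
  rw [MeasureTheory.integral_integral_swap hFint]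
  -- evaluate the inner integral
  have hinner : ∀ x : ℝ × ℝ × ℝ × ℝ,
      (∫ ξ : ℝ, E x * Real.cos (2 * π * (-x.1 - x.2.1 + x.2.2.1 + x.2.2.2) * ξ)
        * rexp (-a * ξ ^ 2))
      = E x * (Real.sqrt (π / a) *
          rexp (-(2 * π * (-x.1 - x.2.1 + x.2.2.1 + x.2.2.2)) ^ 2 / (4 * a))) := by
    intro x
    rw [← cosGauss a (2 * π * (-x.1 - x.2.1 + x.2.2.1 + x.2.2.2)) ha, ← integral_const_mul]
    refine integral_congr_ae (.of_forall fun ξ => ?_)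
    ring
  rw [integral_congr_ae (.of_forall hinner)]
  -- positivity
  set f : ℝ × ℝ × ℝ × ℝ → ℝ := fun x => E x * (Real.sqrt (π / a) *
      rexp (-(2 * π * (-x.1 - x.2.1 + x.2.2.1 + x.2.2.2)) ^ 2 / (4 * a))) with hf_def
  have hfpos : ∀ x, 0 < f x := by
    intro x
    have := E_pos x
    have hs : 0 < Real.sqrt (π / a) := Real.sqrt_pos.mpr (by positivity)
    positivity
  have hfint : IntegrableOn f S := by
    refine Integrable.mono' ((E_int.const_mul (Real.sqrt (π / a))).restrict (s := S)) ?_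
      (.of_forall fun x => ?_)
    · refine Continuous.aestronglyMeasurable ?_
      have := E_cont
      fun_prop
    · rw [Real.norm_eq_abs, abs_of_pos (hfpos x)]
      have h1 : rexp (-(2 * π * (-x.1 - x.2.1 + x.2.2.1 + x.2.2.2)) ^ 2 / (4 * a)) ≤ 1 := by
        rw [← Real.exp_zero]
        apply Real.exp_le_exp.mpr
        have hsq : (0:ℝ) ≤ (2 * π * (-x.1 - x.2.1 + x.2.2.1 + x.2.2.2)) ^ 2 := sq_nonneg _
        have h4a : (0:ℝ) < 4 * a := by linarith
        rw [div_le_iff₀ h4a]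
        nlinarith
      calc f x = E x * (Real.sqrt (π / a) *
            rexp (-(2 * π * (-x.1 - x.2.1 + x.2.2.1 + x.2.2.2)) ^ 2 / (4 * a))) := rfl
        _ ≤ E x * (Real.sqrt (π / a) * 1) := by
            gcongr
            exact (E_pos _).le
        _ = Real.sqrt (π / a) * E x := by ring
  rw [setIntegral_pos_iff_support_of_nonneg_ae
    (Filter.Eventually.of_forall fun x => (hfpos x).le) hfint]
  have hsupp : Function.support f = Set.univ := by
    ext x; simp [Function.mem_support, (hfpos x).ne']
  rw [hsupp, Set.univ_inter]
  exact S_pos
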